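/- If f : S → R is a betweenness isomorphism between subsets S, R of the Euclidean plane and A ⊆ S, then f maps the collinear hull of A in S onto the collinear hull of f(A) in R, i.e., f(ch_S(A)) = ch_R(f(A)). -/

import Mathlib

/-- The open segment `(a,b) = [a,b] \ {a,b}`. -/
def oseg (a b : ℝ × ℝ) : Set (ℝ × ℝ) := segment ℝ a b \ {a, b}

/-- `f` is a betweenness isomorphism of `S` and `R`. -/
def BIso (S R : Set (ℝ × ℝ)) (f : ℝ × ℝ → ℝ × ℝ) : Prop :=
  Set.BijOn f S R ∧
    ∀ a ∈ S, ∀ b ∈ S, ∀ c ∈ S, (c ∈ oseg a b ↔ f c ∈ oseg (f a) (f b))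

/-- `B` is collinearly closed in `S`. -/
def CollClosed (S B : Set (ℝ × ℝ)) : Prop :=
  ∀ c ∈ S, (∃ a ∈ B \ {c}, ∃ b ∈ B \ {c}, a ≠ b ∧ Collinear ℝ {a, b, c}) → c ∈ B

/-- The collinear hull of `A` in `S`: the smallest subset of `S` containing `A`
which is collinearly closed in `S`. -/
def chull (S A : Set (ℝ × ℝ)) : Set (ℝ × ℝ) :=
  ⋂₀ {B | A ⊆ B ∧ B ⊆ S ∧ CollClosed S B}

lemma mem_oseg_iff_wbtw {a b c : ℝ × ℝ} :
    c ∈ oseg a b ↔ Wbtw ℝ a c b ∧ c ≠ a ∧ c ≠ b := by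
  simp [oseg, mem_segment_iff_wbtw, and_assoc]

lemma oseg_collinear {a b c : ℝ × ℝ} (h : c ∈ oseg a b) :
    Collinear ℝ ({a, b, c} : Set (ℝ × ℝ)) := by
  have := (mem_oseg_iff_wbtw.1 h).1.collinear
  have heq : ({a, c, b} : Set (ℝ × ℝ)) = {a, b, c} := by
    simp [Set.insert_comm, Set.pair_comm]
  rwa [heq] at this

lemma collinear_iff_oseg {a b c : ℝ × ℝ} (hab : a ≠ b) (hac : a ≠ c) (hbc : b ≠ c) :
    Collinear ℝ ({a, b, c} : Set (ℝ × ℝ)) ↔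
      a ∈ oseg b c ∨ b ∈ oseg a c ∨ c ∈ oseg a b := by
  constructor
  · intro h
    rcases h.wbtw_or_wbtw_or_wbtw with h1 | h1 | h1
    · exact Or.inr (Or.inl (mem_oseg_iff_wbtw.2 ⟨h1, hab.symm, hbc⟩))
    · exact Or.inr (Or.inr (mem_oseg_iff_wbtw.2 ⟨h1.symm, hac.symm, hbc.symm⟩))
    · exact Or.inl (mem_oseg_iff_wbtw.2 ⟨h1.symm, hab, hac⟩)
  · rintro (h | h | h)
    · have := oseg_collinear h
      have heq : ({b, c, a} : Set (ℝ × ℝ)) = {a, b, c} := by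
        ext x; simp; tauto
      rwa [heq] at this
    · have := oseg_collinear h
      have heq : ({a, c, b} : Set (ℝ × ℝ)) = {a, b, c} := by
        ext x; simp; tauto
      rwa [heq] at this
    · exact oseg_collinear h

lemma subset_chull {S A : Set (ℝ × ℝ)} : A ⊆ chull S A :=
  fun _ hx _ hB => hB.1 hx

lemma chull_subset {S A : Set (ℝ × ℝ)} (hA : A ⊆ S) : chull S A ⊆ S :=
  Set.sInter_subset_of_mem (by exact ⟨hA, subset_rfl, fun c hc _ => hc⟩)

lemma chull_closed {S A : Set (ℝ × ℝ)} : CollClosed S (chull S A) := by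
  rintro c hc ⟨a, ha, b, hb, hab, hcol⟩ B hB
  exact hB.2.2 c hc ⟨a, ⟨ha.1 B hB, ha.2⟩, b, ⟨hb.1 B hB, hb.2⟩, hab, hcol⟩

lemma chull_min {S A B : Set (ℝ × ℝ)} (h1 : A ⊆ B) (h2 : B ⊆ S) (h3 : CollClosed S B) :
    chull S A ⊆ B :=
  Set.sInter_subset_of_mem ⟨h1, h2, h3⟩

/-- A betweenness isomorphism maps the collinear hull of `A ⊆ S` in `S` onto the
collinear hull of `f(A)` in `R`. -/
theorem stmt_2 (S R : Set (ℝ × ℝ)) (f : ℝ × ℝ → ℝ × ℝ) (hf : BIso S R f)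
    (A : Set (ℝ × ℝ)) (hA : A ⊆ S) :
    f '' chull S A = chull R (f '' A) := by
  obtain ⟨hbij, hbet⟩ := hf
  set C := chull S A with hC
  have hCS : C ⊆ S := chull_subset hA
  have hfAR : f '' A ⊆ R := fun y ⟨x, hx, hxy⟩ => hxy ▸ hbij.1 (hA hx)
  -- key: transfer collinearity through f for points of S
  have key : ∀ a ∈ S, ∀ b ∈ S, ∀ c ∈ S, a ≠ b → a ≠ c → b ≠ c →
      (Collinear ℝ ({a, b, c} : Set (ℝ × ℝ)) ↔
        Collinear ℝ ({f a, f b, f c} : Set (ℝ × ℝ))) := by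
    intro a ha b hb c hc hab hac hbc
    have fab : f a ≠ f b := fun h => hab (hbij.2.1 ha hb h)
    have fac : f a ≠ f c := fun h => hac (hbij.2.1 ha hc h)
    have fbc : f b ≠ f c := fun h => hbc (hbij.2.1 hb hc h)
    rw [collinear_iff_oseg hab hac hbc, collinear_iff_oseg fab fac fbc,
      hbet b hb c hc a ha, hbet a ha c hc b hb, hbet a ha b hb c hc]
  apply Set.Subset.antisymm
  · -- f '' C ⊆ chull R (f '' A), via preimage
    have : C ⊆ S ∩ f ⁻¹' (chull R (f '' A)) := by
      apply chull_min
      · exact fun x hx => ⟨hA hx, subset_chull ⟨x, hx, rfl⟩⟩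
      · exact Set.inter_subset_left
      · rintro c hc ⟨a, ⟨⟨haS, haP⟩, hane⟩, b, ⟨⟨hbS, hbP⟩, hbne⟩, hab, hcol⟩
        refine ⟨hc, ?_⟩
        have hac : a ≠ c := by simpa using hane
        have hbc : b ≠ c := by simpa using hbne
        have hcol' := (key a haS b hbS c hc hab hac hbc).1 hcol
        refine chull_closed (f c) (hbij.1 hc)
          ⟨f a, ⟨haP, ?_⟩, f b, ⟨hbP, ?_⟩, fun h => hab (hbij.2.1 haS hbS h), hcol'⟩
        · simp only [Set.mem_singleton_iff]
          exact fun h => hac (hbij.2.1 haS hc h)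
        · simp only [Set.mem_singleton_iff]
          exact fun h => hbc (hbij.2.1 hbS hc h)
    rintro _ ⟨x, hx, rfl⟩
    exact (this hx).2
  · -- chull R (f '' A) ⊆ f '' C : show f '' C is in the family
    apply chull_min
    · exact Set.image_mono (f := f) subset_chull
    · rintro _ ⟨x, hx, rfl⟩; exact hbij.1 (hCS hx)
    · rintro c' hc' ⟨a', ⟨⟨a, haC, rfl⟩, hane⟩, b', ⟨⟨b, hbC, rfl⟩, hbne⟩, hab', hcol⟩
      obtain ⟨c, hcS, rfl⟩ := hbij.2.2 hc'
      have haS : a ∈ S := hCS haC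
      have hbS : b ∈ S := hCS hbC
      have hab : a ≠ b := fun h => hab' (by rw [h])
      have hane' : f a ≠ f c := by simpa using hane
      have hbne' : f b ≠ f c := by simpa using hbne
      have hac : a ≠ c := fun h => hane' (by rw [h])
      have hbc : b ≠ c := fun h => hbne' (by rw [h])
      have hcol' := (key a haS b hbS c hcS hab hac hbc).2 hcol
      refine ⟨c, chull_closed c hcS ⟨a, ⟨haC, ?_⟩, b, ⟨hbC, ?_⟩, hab, hcol'⟩, rfl⟩
      · simpa using hac
      · simpa using hbc
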